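/- If the revealed preference relations on a finite dataset satisfy GARP, then there exist strictly positive real numbers U^k and λ^k for each observation k such that U^k ≤ U^l + λ^l ⟨p^l, q^k_{o^l} - q^l_{o^l}⟩ for every pair of observations (k,l). -/

import Mathlib

open Finset in
theorem afriat_aux {K : Type*} [Fintype K] [Nonempty K] (A : K → K → ℝ)
    (hAd : ∀ k, A k k = 0)
    (hg : ∀ k l, Relation.TransGen (fun a b => A b a ≤ 0) k l → 0 ≤ A k l) :
    ∃ U lam : K → ℝ, (∀ k, 0 < U k) ∧ (∀ k, 0 < lam k) ∧
      ∀ k l, U k ≤ U l + lam l * A k l := by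
  classical
  set R : K → K → Prop := Relation.ReflTransGen (fun a b => A b a ≤ 0) with hR
  have hgarp : ∀ k l, R k l → 0 ≤ A k l := by
    intro k l h
    rcases Relation.reflTransGen_iff_eq_or_transGen.mp h with h' | h'
    · rw [h', hAd]
    · exact hg k l h'
  set ρ : K → ℕ := fun k => (univ.filter fun m => R k m).card with hρ
  set n := Fintype.card K with hn
  have hρ_le : ∀ k, ρ k ≤ n := fun k => (card_filter_le _ _).trans (le_of_eq (card_univ))
  have hmono : ∀ k l, R l k → ρ k ≤ ρ l := by
    intro k l h
    apply card_le_card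
    intro m hm
    simp only [mem_filter, mem_univ, true_and] at *
    exact h.trans hm
  have hstrict : ∀ k l, A k l < 0 → ρ k < ρ l := by
    intro k l h
    have hlk : R l k := Relation.ReflTransGen.single h.le
    have hnkl : ¬ R k l := by
      intro hkl
      exact absurd h (not_lt.2 (hgarp k l hkl))
    apply card_lt_card
    constructor
    · intro m hm
      simp only [mem_filter, mem_univ, true_and] at *
      exact hlk.trans hm
    · intro hsub
      apply hnkl
      have : l ∈ univ.filter fun m => R l m := by
        simp only [mem_filter, mem_univ, true_and]
        exact Relation.ReflTransGen.refl
      have := hsub this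
      simp only [mem_filter, mem_univ, true_and] at this
      exact this
  -- ε : a positive lower bound for positive entries of A, ε ≤ 1
  set E : Finset ℝ :=
    insert 1 (((univ : Finset (K × K)).image fun x => A x.1 x.2).filter fun y => 0 < y)
    with hE
  have hEne : E.Nonempty := ⟨1, mem_insert_self _ _⟩
  set ε : ℝ := E.min' hEne with hεdef
  have hε0 : 0 < ε := by
    rw [hεdef]
    rw [Finset.lt_min'_iff]
    intro y hy
    rcases mem_insert.mp hy with h | h
    · rw [h]; norm_num
    · exact (mem_filter.mp h).2
  have hεA : ∀ k l, 0 < A k l → ε ≤ A k l := by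
    intro k l h
    apply min'_le
    apply mem_insert_of_mem
    rw [mem_filter]
    exact ⟨mem_image.mpr ⟨(k, l), mem_univ _, rfl⟩, h⟩
  -- M : upper bound for |A|, M ≥ 1
  set F : Finset ℝ :=
    insert 1 ((univ : Finset (K × K)).image fun x => |A x.1 x.2|) with hF
  have hFne : F.Nonempty := ⟨1, mem_insert_self _ _⟩
  set M : ℝ := F.max' hFne with hMdef
  have hM1 : (1 : ℝ) ≤ M := le_max' _ 1 (mem_insert_self _ _)
  have hMA : ∀ k l, |A k l| ≤ M := by
    intro k l
    apply le_max'
    exact mem_insert_of_mem (mem_image.mpr ⟨(k, l), mem_univ _, rfl⟩)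
  set c : ℝ := 1 + M / ε with hcdef
  have hc1 : 1 < c := by
    rw [hcdef]
    have : 0 < M / ε := div_pos (lt_of_lt_of_le one_pos hM1) hε0
    linarith
  have hc0 : (0 : ℝ) < c := lt_trans one_pos hc1
  have hεc : ε * (c - 1) = M := by
    rw [hcdef]
    field_simp
    ring
  have hpowmono : ∀ a b : ℕ, a ≤ b → c ^ a ≤ c ^ b := by
    intro a b hab
    exact pow_le_pow_right₀ (le_of_lt hc1) hab
  set μ : K → ℕ := fun k => n - ρ k with hμ
  have hμ_le : ∀ k, μ k ≤ n := fun k => Nat.sub_le _ _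
  refine ⟨fun k => 1 + ε * c ^ n - ε * c ^ (μ k), fun l => c ^ (μ l), ?_, ?_, ?_⟩
  · intro k
    show 0 < 1 + ε * c ^ n - ε * c ^ (μ k)
    have h1 : c ^ (μ k) ≤ c ^ n := hpowmono _ _ (hμ_le k)
    have h2 : ε * c ^ (μ k) ≤ ε * c ^ n := mul_le_mul_of_nonneg_left h1 hε0.le
    linarith
  · intro l
    exact pow_pos hc0 _
  · intro k l
    have key : ε * c ^ (μ l) - ε * c ^ (μ k) ≤ c ^ (μ l) * A k l := by
      rcases lt_trichotomy (A k l) 0 with h | h | h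
      · -- negative entry: strict rank drop
        have hrk : ρ k < ρ l := hstrict k l h
        have hrl : ρ l ≤ n := hρ_le l
        have hμlk : μ l + 1 ≤ μ k := by
          simp only [hμ]
          omega
        have h1 : c ^ (μ l + 1) ≤ c ^ (μ k) := hpowmono _ _ hμlk
        have h2 : -M ≤ A k l := by
          have := hMA k l
          rw [abs_le] at this
          exact this.1
        have h3 : c ^ (μ l) * (-M) ≤ c ^ (μ l) * A k l :=
          mul_le_mul_of_nonneg_left h2 (le_of_lt (pow_pos hc0 _))
        have h4 : c ^ (μ l) * (-M) = ε * c ^ (μ l) - ε * c ^ (μ l + 1) := by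
          rw [← hεc]
          ring
        nlinarith [hε0]
      · -- zero entry: weak rank drop
        have hlk : R l k := Relation.ReflTransGen.single h.le
        have hrk : ρ k ≤ ρ l := hmono k l hlk
        have hμlk : μ l ≤ μ k := by
          simp only [hμ]
          omega
        have h1 : c ^ (μ l) ≤ c ^ (μ k) := hpowmono _ _ hμlk
        have h2 : ε * c ^ (μ l) ≤ ε * c ^ (μ k) := mul_le_mul_of_nonneg_left h1 hε0.le
        rw [h, mul_zero]
        linarith
      · -- positive entry: at least ε
        have h1 : ε ≤ A k l := hεA k l h
        have h2 : (0 : ℝ) < c ^ (μ k) := pow_pos hc0 _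
        have h3 : (0 : ℝ) < c ^ (μ l) := pow_pos hc0 _
        nlinarith [hε0]
    show 1 + ε * c ^ n - ε * c ^ (μ k) ≤ 1 + ε * c ^ n - ε * c ^ (μ l) + c ^ (μ l) * A k l
    linarith

/-- Afriat direction: if the revealed preference relations of a finite PSM
dataset satisfy GARP, then there exist strictly positive numbers U^k, λ^k
with U^k ≤ U^l + λ^l ⟨p^l, q^k_{o^l} - q^l_{o^l}⟩ for all pairs (k,l). -/
theorem stmt6 (S : ℕ) (K : Type*) [Fintype K]
    (N : Fin S → ℝ)
    (o : K → Fin S → ℝ) (ho : ∀ k s, o k s = 0 ∨ o k s = N s)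
    (p : K → Fin S → ℝ) (hp : ∀ k s, 0 < p k s)
    (q : K → Fin S → ℝ) (hq : ∀ k s, q k s ∈ Set.Icc 0 (N s))
    -- GARP
    (hgarp : ∀ k l : K, Relation.TransGen
        (fun a b : K =>
          (∑ s, p a s * |q b s - o a s|) ≤ (∑ s, p a s * |q a s - o a s|)) k l →
      ¬ ((∑ s, p l s * |q k s - o l s|) < (∑ s, p l s * |q l s - o l s|))) :
    ∃ U lam : K → ℝ, (∀ k, 0 < U k) ∧ (∀ k, 0 < lam k) ∧
      ∀ k l : K, U k ≤ U l + lam l *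
        ∑ s, p l s * (|q k s - o l s| - |q l s - o l s|) := by
  rcases isEmpty_or_nonempty K with hK | hK
  · exact ⟨fun _ => 1, fun _ => 1, fun k => hK.elim k, fun k => hK.elim k,
      fun k l => hK.elim k⟩
  · set A : K → K → ℝ := fun k l => ∑ s, p l s * (|q k s - o l s| - |q l s - o l s|)
      with hA
    have hAsub : ∀ k l, A k l =
        (∑ s, p l s * |q k s - o l s|) - (∑ s, p l s * |q l s - o l s|) := by
      intro k l
      show (∑ s, p l s * (|q k s - o l s| - |q l s - o l s|)) =
        (∑ s, p l s * |q k s - o l s|) - (∑ s, p l s * |q l s - o l s|)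
      rw [← Finset.sum_sub_distrib]
      exact Finset.sum_congr rfl fun s _ => by ring
    have hrel : (fun a b : K => A b a ≤ 0) =
        (fun a b : K =>
          (∑ s, p a s * |q b s - o a s|) ≤ (∑ s, p a s * |q a s - o a s|)) := by
      funext a b
      rw [hAsub]
      exact propext sub_nonpos
    have hAd : ∀ k, A k k = 0 := by
      intro k
      rw [hAsub]
      ring
    have hg : ∀ k l, Relation.TransGen (fun a b => A b a ≤ 0) k l → 0 ≤ A k l := by
      intro k l h
      rw [hrel] at h
      have := hgarp k l h
      rw [not_lt] at this
      rw [hAsub]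
      linarith
    exact afriat_aux A hAd hg
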